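/- Let ≤ be a monomial well-order on FreeMagma E and let I be a two-sided ideal of A. Then A is the internal direct sum of I and the ℚ-linear span of O(I): the ℚ-submodule I and Span_ℚ(O(I)) intersect in {0} and their sum is all of A. -/

import Mathlib

/-- The monomial corresponding to an element of the free magma, inside the free
non-unital non-associative algebra. -/
noncomputable def magmaMonomial {E : Type*} (z : FreeMagma E) :
    FreeNonUnitalNonAssocAlgebra ℚ E :=
  MonoidAlgebra.single z (1 : ℚ)

/-- A ℚ-submodule of the magma algebra which is stable under left and right
multiplication by arbitrary elements: a two-sided ideal. -/
def IsTwoSidedIdealSubmodule {E : Type*}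
    (I : Submodule ℚ (FreeNonUnitalNonAssocAlgebra ℚ E)) : Prop :=
  ∀ a x : FreeNonUnitalNonAssocAlgebra ℚ E, x ∈ I → a * x ∈ I ∧ x * a ∈ I

/-- The maximal term `T f` of a nonzero element `f` of the magma algebra: the largest
monomial in its support, with respect to a given linear order on the free magma. -/
noncomputable def maxTerm {E : Type*} [LinearOrder (FreeMagma E)]
    (f : FreeNonUnitalNonAssocAlgebra ℚ E) (hf : f ≠ 0) : FreeMagma E :=
  f.coeff.support.max' (Finsupp.support_nonempty_iff.mpr (mt MonoidAlgebra.coeff_eq_zero.mp hf))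

/-- `T I`: the set of maximal terms of nonzero elements of `I`. -/
def maxTermSet {E : Type*} [LinearOrder (FreeMagma E)]
    (I : Submodule ℚ (FreeNonUnitalNonAssocAlgebra ℚ E)) : Set (FreeMagma E) :=
  {z | ∃ (f : FreeNonUnitalNonAssocAlgebra ℚ E) (hf : f ≠ 0), f ∈ I ∧ maxTerm f hf = z}

/-- `O I`: the complement of `T I` in the free magma. -/
def outTermSet {E : Type*} [LinearOrder (FreeMagma E)]
    (I : Submodule ℚ (FreeNonUnitalNonAssocAlgebra ℚ E)) : Set (FreeMagma E) :=
  (maxTermSet I)ᶜ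

/-- For a monomial well-order on the free magma and a two-sided ideal `I` of the magma
algebra `A`, the algebra is the internal direct sum of `I` and the linear span of the
monomials in `O(I)`. -/
theorem magmaAlgebra_direct_sum_ideal_span_outTerms (E : Type*) [LinearOrder (FreeMagma E)]
    (hmono : ∀ x y z : FreeMagma E, x < y → x * z < y * z ∧ z * x < z * y)
    (hwell : ∀ S : Set (FreeMagma E), S.Nonempty → ∃ m ∈ S, ∀ x ∈ S, m ≤ x)
    (I : Submodule ℚ (FreeNonUnitalNonAssocAlgebra ℚ E))
    (hI : IsTwoSidedIdealSubmodule I) :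
    I ⊓ Submodule.span ℚ (magmaMonomial '' outTermSet I) = ⊥ ∧
    I ⊔ Submodule.span ℚ (magmaMonomial '' outTermSet I) = ⊤ := by
  classical
  set S := Submodule.span ℚ (magmaMonomial '' outTermSet I) with hS
  have hspan : ∀ f : FreeNonUnitalNonAssocAlgebra ℚ E,
      f ∈ S ↔ (↑f.coeff.support : Set (FreeMagma E)) ⊆ outTermSet I := by
    intro f
    have : (magmaMonomial '' outTermSet I : Set (FreeNonUnitalNonAssocAlgebra ℚ E))
        = (fun z => MonoidAlgebra.single z (1:ℚ)) '' outTermSet I := rfl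
    rw [hS, this, ← MonoidAlgebra.supported_eq_span_single]
    exact MonoidAlgebra.mem_supported
  constructor
  · rw [Submodule.eq_bot_iff]
    rintro f ⟨hfI, hfS⟩
    by_contra hf
    have ht : maxTerm f hf ∈ maxTermSet I := ⟨f, hf, hfI, rfl⟩
    have hmem : maxTerm f hf ∈ f.coeff.support := Finset.max'_mem _ _
    exact (hspan f).mp hfS hmem ht
  · rw [Submodule.eq_top_iff']
    have hwf : WellFounded ((· < ·) : FreeMagma E → FreeMagma E → Prop) := by
      rw [WellFounded.wellFounded_iff_has_min]
      intro s hs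
      obtain ⟨m, hm, hmin⟩ := hwell s hs
      exact ⟨m, hm, fun x hx => not_lt.mpr (hmin x hx)⟩
    have H : ∀ t : FreeMagma E, ∀ f : FreeNonUnitalNonAssocAlgebra ℚ E,
        ∀ hf : f ≠ 0, maxTerm f hf = t → f ∈ I ⊔ S := by
      intro t
      induction t using hwf.induction with
      | _ t ih =>
      intro f hf hft
      have hct : f.coeff t ≠ 0 := by
        rw [← hft]; exact Finsupp.mem_support_iff.mp (Finset.max'_mem _ _)
      have hfle : ∀ s ∈ f.coeff.support, s ≤ t := by
        intro s hs; rw [← hft]; exact Finset.le_max' _ _ hs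
      -- common step
      have step : ∀ g : FreeNonUnitalNonAssocAlgebra ℚ E, g ∈ I ⊔ S → g.coeff t ≠ 0 →
          (∀ s ∈ g.coeff.support, s ≤ t) → f ∈ I ⊔ S := by
        intro g hgmem hgt hgle
        set a : ℚ := f.coeff t / g.coeff t with ha
        set f' : FreeNonUnitalNonAssocAlgebra ℚ E := f - a • g with hf'
        have hagmem : a • g ∈ I ⊔ S := Submodule.smul_mem _ a hgmem
        have hf't : f'.coeff t = 0 := by
          rw [hf', MonoidAlgebra.coeff_sub, Finsupp.sub_apply, MonoidAlgebra.coeff_smul, Finsupp.smul_apply, smul_eq_mul, ha,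
            div_mul_cancel₀ _ hgt, sub_self]
        by_cases hz : f' = 0
        · have : f = a • g := by rwa [hf', sub_eq_zero] at hz
          rw [this]; exact hagmem
        · have hsub : ∀ s ∈ f'.coeff.support, s ≤ t := by
            intro s hs
            rw [hf', MonoidAlgebra.coeff_sub, MonoidAlgebra.coeff_smul] at hs
            rcases Finset.mem_union.mp (Finsupp.support_sub hs) with h | h
            · exact hfle s h
            · exact hgle s (Finsupp.support_smul h)
          have hlt : maxTerm f' hz < t := by
            have h1 : maxTerm f' hz ≤ t := hsub _ (Finset.max'_mem _ _)
            have h2 : maxTerm f' hz ≠ t := by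
              intro h
              have := Finsupp.mem_support_iff.mp (Finset.max'_mem f'.coeff.support
                (Finsupp.support_nonempty_iff.mpr (mt MonoidAlgebra.coeff_eq_zero.mp hz)))
              rw [show f'.coeff.support.max' _ = maxTerm f' hz from rfl, h] at this
              exact this hf't
            exact lt_of_le_of_ne h1 h2
          have hf'mem : f' ∈ I ⊔ S := ih _ hlt f' hz rfl
          have : f = f' + a • g := by rw [hf', sub_add_cancel]
          rw [this]; exact Submodule.add_mem _ hf'mem hagmem
      by_cases htI : t ∈ maxTermSet I
      · obtain ⟨g, hg, hgI, hgt⟩ := htI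
        refine step g (Submodule.mem_sup_left hgI) ?_ ?_
        · rw [← hgt]; exact Finsupp.mem_support_iff.mp (Finset.max'_mem _ _)
        · intro s hs; rw [← hgt]; exact Finset.le_max' _ _ hs
      · refine step (magmaMonomial t)
          (Submodule.mem_sup_right (Submodule.subset_span ⟨t, htI, rfl⟩)) ?_ ?_
        · show (MonoidAlgebra.single t (1:ℚ)).coeff t ≠ 0
          simp
        · intro s hs
          have : s = t := by
            have := Finsupp.support_single_subset hs
            simpa using this
          exact this.le
    intro f
    by_cases hf : f = 0
    · simp [hf]
    · exact H _ f hf rfl
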